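/- The 10-dimensional space Λ²V* of alternating bilinear forms on V is the internal direct sum of the following four subspaces, of dimensions 1, 2, 3 and 4 respectively: Λ²₁ = {t·Φ : t ∈ ℝ}; Λ²₂ = {β : β(ξ,X) = 0 for all X, and β(φ(X),φ(Y)) = −β(X,Y) for all X,Y}; Λ²₃ = {β : β(φ(X),φ(Y)) = β(X,Y) for all X,Y, and Σᵢ β(bᵢ,φ(bᵢ)) = 0 for every orthonormal basis (b₁,…,b₅) of V}; Λ²₄ = {β : β(X,Y) = 0 whenever η(X) = η(Y) = 0}. (This is the U(2)-decomposition Λ² = Λ²₁ ⊕ Λ²₂ ⊕ Λ²₃ ⊕ Λ²₄ with dim Λ²ᵢ = i, stated without the Hodge star via the equivalent φ-invariance characterizations.) -/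

import Mathlib

open scoped RealInnerProductSpace

noncomputable section

variable {V : Type*} [NormedAddCommGroup V] [InnerProductSpace ℝ V]

/-- The fundamental 2-form `Φ(X,Y) = ⟪X, φ(Y)⟫` as a bilinear map. -/
def fundForm (φ : V →ₗ[ℝ] V) : V →ₗ[ℝ] V →ₗ[ℝ] ℝ :=
  LinearMap.mk₂ ℝ (fun X Y => ⟪X, φ Y⟫)
    (fun X X' Y => by simp [inner_add_left])
    (fun c X Y => by simp [real_inner_smul_left])
    (fun X Y Y' => by simp [inner_add_right])
    (fun c X Y => by simp [real_inner_smul_right])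

/-- The space `Λ²V*` of alternating bilinear forms on `V`. -/
def Lambda2 (V : Type*) [NormedAddCommGroup V] [InnerProductSpace ℝ V] :
    Submodule ℝ (V →ₗ[ℝ] V →ₗ[ℝ] ℝ) where
  carrier := {β | ∀ X Y : V, β X Y = -β Y X}
  add_mem' := by
    intro β γ hβ hγ X Y
    simp only [LinearMap.add_apply]
    rw [hβ X Y, hγ X Y]; ring
  zero_mem' := by intro X Y; simp
  smul_mem' := by
    intro c β hβ X Y
    simp only [LinearMap.smul_apply, smul_eq_mul]
    rw [hβ X Y]; ring

/-- `Λ²₁ = {t·Φ : t ∈ ℝ}`. -/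
def Lambda2₁ (φ : V →ₗ[ℝ] V) : Submodule ℝ (V →ₗ[ℝ] V →ₗ[ℝ] ℝ) :=
  Submodule.span ℝ {fundForm φ}

/-- `Λ²₂`: alternating forms with `β(ξ,·) = 0` and `β(φX,φY) = −β(X,Y)`. -/
def Lambda2₂ (ξ : V) (φ : V →ₗ[ℝ] V) : Submodule ℝ (V →ₗ[ℝ] V →ₗ[ℝ] ℝ) where
  carrier := {β | (∀ X Y : V, β X Y = -β Y X) ∧ (∀ X : V, β ξ X = 0)
    ∧ ∀ X Y : V, β (φ X) (φ Y) = -β X Y}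
  add_mem' := by
    rintro β γ ⟨hβ1, hβ2, hβ3⟩ ⟨hγ1, hγ2, hγ3⟩
    refine ⟨fun X Y => ?_, fun X => ?_, fun X Y => ?_⟩ <;>
      simp only [LinearMap.add_apply]
    · rw [hβ1 X Y, hγ1 X Y]; ring
    · rw [hβ2 X, hγ2 X]; ring
    · rw [hβ3 X Y, hγ3 X Y]; ring
  zero_mem' := ⟨fun X Y => by simp, fun X => by simp, fun X Y => by simp⟩
  smul_mem' := by
    rintro c β ⟨h1, h2, h3⟩
    refine ⟨fun X Y => ?_, fun X => ?_, fun X Y => ?_⟩ <;>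
      simp only [LinearMap.smul_apply, smul_eq_mul]
    · rw [h1 X Y]; ring
    · rw [h2 X]; ring
    · rw [h3 X Y]; ring

/-- `Λ²₃`: alternating forms with `β(φX,φY) = β(X,Y)` and vanishing trace
`Σᵢ β(bᵢ, φ(bᵢ)) = 0` for every orthonormal basis `b`. -/
def Lambda2₃ (φ : V →ₗ[ℝ] V) : Submodule ℝ (V →ₗ[ℝ] V →ₗ[ℝ] ℝ) where
  carrier := {β | (∀ X Y : V, β X Y = -β Y X)
    ∧ (∀ X Y : V, β (φ X) (φ Y) = β X Y)
    ∧ ∀ b : OrthonormalBasis (Fin 5) ℝ V, ∑ i, β (b i) (φ (b i)) = 0}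
  add_mem' := by
    rintro β γ ⟨hβ1, hβ2, hβ3⟩ ⟨hγ1, hγ2, hγ3⟩
    refine ⟨fun X Y => ?_, fun X Y => ?_, fun b => ?_⟩ <;>
      simp only [LinearMap.add_apply]
    · rw [hβ1 X Y, hγ1 X Y]; ring
    · rw [hβ2 X Y, hγ2 X Y]
    · rw [Finset.sum_add_distrib, hβ3 b, hγ3 b]; ring
  zero_mem' := ⟨fun X Y => by simp, fun X Y => by simp, fun b => by simp⟩
  smul_mem' := by
    rintro c β ⟨h1, h2, h3⟩
    refine ⟨fun X Y => ?_, fun X Y => ?_, fun b => ?_⟩ <;>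
      simp only [LinearMap.smul_apply, smul_eq_mul]
    · rw [h1 X Y]; ring
    · rw [h2 X Y]
    · rw [← Finset.mul_sum, h3 b]; ring

/-- `Λ²₄`: alternating forms vanishing on `ker η × ker η`, where `η(X) = ⟪X, ξ⟫`. -/
def Lambda2₄ (ξ : V) : Submodule ℝ (V →ₗ[ℝ] V →ₗ[ℝ] ℝ) where
  carrier := {β | (∀ X Y : V, β X Y = -β Y X)
    ∧ ∀ X Y : V, ⟪X, ξ⟫ = 0 → ⟪Y, ξ⟫ = 0 → β X Y = 0}
  add_mem' := by
    rintro β γ ⟨hβ1, hβ2⟩ ⟨hγ1, hγ2⟩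
    refine ⟨fun X Y => ?_, fun X Y hX hY => ?_⟩ <;> simp only [LinearMap.add_apply]
    · rw [hβ1 X Y, hγ1 X Y]; ring
    · rw [hβ2 X Y hX hY, hγ2 X Y hX hY]; ring
  zero_mem' := ⟨fun X Y => by simp, fun X Y _ _ => by simp⟩
  smul_mem' := by
    rintro c β ⟨h1, h2⟩
    refine ⟨fun X Y => ?_, fun X Y hX hY => ?_⟩ <;>
      simp only [LinearMap.smul_apply, smul_eq_mul]
    · rw [h1 X Y]; ring
    · rw [h2 X Y hX hY]; ring

end

noncomputable section Helpers
open Module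
variable {V : Type*} [NormedAddCommGroup V] [InnerProductSpace ℝ V]

@[simp] lemma fundForm_apply (φ : V →ₗ[ℝ] V) (X Y : V) : fundForm φ X Y = ⟪X, φ Y⟫ := rfl

section props
variable (ξ : V) (φ : V →ₗ[ℝ] V)

lemma phi_alt (hskew : ∀ X Z : V, ⟪φ X, Z⟫ = -⟪X, φ Z⟫) (X Y : V) :
    fundForm φ X Y = -fundForm φ Y X := by
  simp only [fundForm_apply]
  have h := hskew Y X
  have c := real_inner_comm X (φ Y)
  linarith

lemma phi_xi (hηφ : ∀ X : V, ⟪φ X, ξ⟫ = 0) (X : V) : fundForm φ ξ X = 0 := by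
  simp only [fundForm_apply]
  rw [real_inner_comm, hηφ]

lemma phi_inv (hηφ : ∀ X : V, ⟪φ X, ξ⟫ = 0)
    (hmetric : ∀ X Y : V, ⟪φ X, φ Y⟫ = ⟪X, Y⟫ - ⟪X, ξ⟫ * ⟪Y, ξ⟫) (X Y : V) :
    fundForm φ (φ X) (φ Y) = fundForm φ X Y := by
  simp only [fundForm_apply]
  rw [hmetric X (φ Y), hηφ Y]
  ring

end props


lemma eta_phi (ξ : V) (φ : V →ₗ[ℝ] V) (hξ : ⟪ξ, ξ⟫ = 1)
    (hφ2 : ∀ X : V, φ (φ X) = -X + ⟪X, ξ⟫ • ξ)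
    (hmetric : ∀ X Y : V, ⟪φ X, φ Y⟫ = ⟪X, Y⟫ - ⟪X, ξ⟫ * ⟪Y, ξ⟫) :
    ∀ X : V, ⟪φ X, ξ⟫ = 0 := by
  intro Y
  have h1 := hmetric (φ Y) (φ Y)
  rw [hφ2 Y] at h1
  have h2 : ⟪-Y + ⟪Y,ξ⟫ • ξ, -Y + ⟪Y,ξ⟫ • ξ⟫ = ⟪Y, Y⟫ - ⟪Y,ξ⟫ * ⟪Y,ξ⟫ := by
    simp only [inner_add_left, inner_add_right, inner_neg_left, inner_neg_right,
      real_inner_smul_left, real_inner_smul_right, hξ, real_inner_comm Y ξ]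
    ring
  rw [h2, hmetric Y Y] at h1
  have : ⟪φ Y, ξ⟫ * ⟪φ Y, ξ⟫ = 0 := by linarith
  exact mul_self_eq_zero.mp this

lemma phi_skew (ξ : V) (φ : V →ₗ[ℝ] V)
    (hφ2 : ∀ X : V, φ (φ X) = -X + ⟪X, ξ⟫ • ξ)
    (hmetric : ∀ X Y : V, ⟪φ X, φ Y⟫ = ⟪X, Y⟫ - ⟪X, ξ⟫ * ⟪Y, ξ⟫)
    (hηφ : ∀ X : V, ⟪φ X, ξ⟫ = 0) :
    ∀ X Z : V, ⟪φ X, Z⟫ = -⟪X, φ Z⟫ := by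
  intro X Z
  have h1 := hmetric X (φ Z)
  rw [hφ2 Z] at h1
  rw [inner_add_right, real_inner_smul_right, inner_neg_right] at h1
  have h2 := hηφ Z
  have h3 := hηφ X
  rw [h2, h3] at h1
  simp at h1
  linarith


lemma exists_adapted [FiniteDimensional ℝ V] (hdim : finrank ℝ V = 5)
    (ξ : V) (φ : V →ₗ[ℝ] V) (hξ : ⟪ξ, ξ⟫ = 1) (hφξ : φ ξ = 0)
    (hφ2 : ∀ X : V, φ (φ X) = -X + ⟪X, ξ⟫ • ξ)
    (hmetric : ∀ X Y : V, ⟪φ X, φ Y⟫ = ⟪X, Y⟫ - ⟪X, ξ⟫ * ⟪Y, ξ⟫)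
    (hηφ : ∀ X : V, ⟪φ X, ξ⟫ = 0)
    (hskew : ∀ X Z : V, ⟪φ X, Z⟫ = -⟪X, φ Z⟫) :
    ∃ b : OrthonormalBasis (Fin 5) ℝ V, b 4 = ξ ∧ φ (b 0) = b 1 ∧ φ (b 1) = -b 0
      ∧ φ (b 2) = b 3 ∧ φ (b 3) = -b 2 := by
  classical
  have hξne : ξ ≠ 0 := fun h => by simp [h] at hξ
  have hK : 0 < finrank ℝ ((ℝ ∙ ξ)ᗮ : Submodule ℝ V) := by
    have h1 := Submodule.finrank_add_finrank_orthogonal (K := (ℝ ∙ ξ))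
    rw [finrank_span_singleton hξne, hdim] at h1
    omega
  have hKbot : ((ℝ ∙ ξ)ᗮ : Submodule ℝ V) ≠ ⊥ := by
    intro h; rw [h] at hK; simp at hK
  obtain ⟨x, hxK, hxne⟩ := Submodule.ne_bot_iff _ |>.mp hKbot
  set e0 : V := ‖x‖⁻¹ • x with he0def
  have he00 : ⟪e0, e0⟫ = 1 := by
    have hxn : ‖x‖ ≠ 0 := norm_ne_zero_iff.mpr hxne
    rw [he0def, real_inner_smul_left, real_inner_smul_right, real_inner_self_eq_norm_sq, pow_two]
    field_simp
  have hξ0 : ⟪ξ, e0⟫ = 0 := by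
    rw [he0def, real_inner_smul_right]
    rw [Submodule.mem_orthogonal] at hxK
    rw [hxK ξ (Submodule.mem_span_singleton_self ξ)]; ring
  -- second complement
  set S : Finset V := {ξ, e0, φ e0} with hSdef
  have hWpos : 0 < finrank ℝ ((Submodule.span ℝ (S : Set V))ᗮ : Submodule ℝ V) := by
    have h1 := Submodule.finrank_add_finrank_orthogonal (K := Submodule.span ℝ (S : Set V))
    have h2 : finrank ℝ (Submodule.span ℝ (S : Set V)) ≤ 3 := by
      refine le_trans (finrank_span_finset_le_card S) ?_
      refine le_trans (Finset.card_insert_le _ _) ?_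
      refine Nat.succ_le_succ (le_trans (Finset.card_insert_le _ _) ?_)
      simp
    rw [hdim] at h1
    omega
  have hWbot : ((Submodule.span ℝ (S : Set V))ᗮ : Submodule ℝ V) ≠ ⊥ := by
    intro h; rw [h] at hWpos; simp at hWpos
  obtain ⟨y, hyW, hyne⟩ := Submodule.ne_bot_iff _ |>.mp hWbot
  set e2 : V := ‖y‖⁻¹ • y with he2def
  have he22 : ⟪e2, e2⟫ = 1 := by
    have hyn : ‖y‖ ≠ 0 := norm_ne_zero_iff.mpr hyne
    rw [he2def, real_inner_smul_left, real_inner_smul_right, real_inner_self_eq_norm_sq, pow_two]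
    field_simp
  rw [Submodule.mem_orthogonal] at hyW
  have horth : ∀ v ∈ S, ⟪v, e2⟫ = 0 := by
    intro v hv
    rw [he2def, real_inner_smul_right, hyW v (Submodule.subset_span hv)]; ring
  have hξ2 : ⟪ξ, e2⟫ = 0 := horth ξ (by simp [hSdef])
  have h02 : ⟪e0, e2⟫ = 0 := horth e0 (by simp [hSdef])
  have h12 : ⟪φ e0, e2⟫ = 0 := horth (φ e0) (by simp [hSdef])

  have h04 : ⟪e0, ξ⟫ = 0 := real_inner_comm ξ e0 ▸ hξ0
  have h24 : ⟪e2, ξ⟫ = 0 := real_inner_comm ξ e2 ▸ hξ2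
  have h01 : ⟪e0, φ e0⟫ = 0 := by
    have h := hskew e0 e0; have h' := real_inner_comm e0 (φ e0); linarith
  have h23 : ⟪e2, φ e2⟫ = 0 := by
    have h := hskew e2 e2; have h' := real_inner_comm e2 (φ e2); linarith
  have h03 : ⟪e0, φ e2⟫ = 0 := by
    have h := hskew e2 e0; have h' := real_inner_comm e0 (φ e2)
    have h'' := real_inner_comm e2 (φ e0); rw [h12] at h''; linarith
  have h11 : ⟪φ e0, φ e0⟫ = 1 := by rw [hmetric, h04, he00]; ring
  have h33 : ⟪φ e2, φ e2⟫ = 1 := by rw [hmetric, h24, he22]; ring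
  have h13 : ⟪φ e0, φ e2⟫ = 0 := by rw [hmetric, h02, h04]; ring
  have h14 : ⟪φ e0, ξ⟫ = 0 := hηφ e0
  have h34 : ⟪φ e2, ξ⟫ = 0 := hηφ e2

  have l10 : ⟪φ e0, e0⟫ = 0 := (real_inner_comm (e0) (φ e0)).trans h01
  have l20 : ⟪e2, e0⟫ = 0 := (real_inner_comm (e0) (e2)).trans h02
  have l21 : ⟪e2, φ e0⟫ = 0 := (real_inner_comm (φ e0) (e2)).trans h12
  have l30 : ⟪φ e2, e0⟫ = 0 := (real_inner_comm (e0) (φ e2)).trans h03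
  have l31 : ⟪φ e2, φ e0⟫ = 0 := (real_inner_comm (φ e0) (φ e2)).trans h13
  have l32 : ⟪φ e2, e2⟫ = 0 := (real_inner_comm (e2) (φ e2)).trans h23
  have l40 : ⟪ξ, e0⟫ = 0 := (real_inner_comm (e0) (ξ)).trans h04
  have l41 : ⟪ξ, φ e0⟫ = 0 := (real_inner_comm (φ e0) (ξ)).trans h14
  have l42 : ⟪ξ, e2⟫ = 0 := (real_inner_comm (e2) (ξ)).trans h24
  have l43 : ⟪ξ, φ e2⟫ = 0 := (real_inner_comm (φ e2) (ξ)).trans h34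
  set e : Fin 5 → V := ![e0, φ e0, e2, φ e2, ξ] with hedef
  have n0 : ‖e0‖ = 1 := by rw [norm_eq_sqrt_real_inner, he00, Real.sqrt_one]
  have n1 : ‖φ e0‖ = 1 := by rw [norm_eq_sqrt_real_inner, h11, Real.sqrt_one]
  have n2 : ‖e2‖ = 1 := by rw [norm_eq_sqrt_real_inner, he22, Real.sqrt_one]
  have n3 : ‖φ e2‖ = 1 := by rw [norm_eq_sqrt_real_inner, h33, Real.sqrt_one]
  have n4 : ‖ξ‖ = 1 := by rw [norm_eq_sqrt_real_inner, hξ, Real.sqrt_one]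
  have hON : Orthonormal ℝ e := by
    rw [orthonormal_iff_ite]
    intro i j
    fin_cases i <;> fin_cases j <;>
      simp [hedef, he00, h01, h02, h03, h04, h11, h12, h13, h14, he22, h23, h24, h33, h34, hξ, l10, l20, l21, l30, l31, l32, l40, l41, l42, l43, n0, n1, n2, n3, n4]
  refine ⟨(basisOfOrthonormalOfCardEqFinrank hON (by simp [hdim])).toOrthonormalBasis
    (by rwa [coe_basisOfOrthonormalOfCardEqFinrank]), ?_⟩
  set b := (basisOfOrthonormalOfCardEqFinrank hON (by simp [hdim])).toOrthonormalBasis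
    (by rwa [coe_basisOfOrthonormalOfCardEqFinrank]) with hbdef
  have hb : ⇑b = e := by
    rw [hbdef, Basis.coe_toOrthonormalBasis, coe_basisOfOrthonormalOfCardEqFinrank]
  rw [hb]
  refine ⟨rfl, rfl, ?_, rfl, ?_⟩
  · show φ (φ e0) = -e0
    rw [hφ2, h04]; simp
  · show φ (φ e2) = -e2
    rw [hφ2, h24]; simp


def wdg (u v : V) : V →ₗ[ℝ] V →ₗ[ℝ] ℝ :=
  LinearMap.mk₂ ℝ (fun X Y => ⟪u, X⟫ * ⟪v, Y⟫ - ⟪v, X⟫ * ⟪u, Y⟫)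
    (fun X X' Y => by simp [inner_add_right]; ring)
    (fun c X Y => by simp [real_inner_smul_right]; ring)
    (fun X Y Y' => by simp [inner_add_right]; ring)
    (fun c X Y => by simp [real_inner_smul_right]; ring)

@[simp] lemma wdg_apply (u v X Y : V) :
    wdg u v X Y = ⟪u, X⟫ * ⟪v, Y⟫ - ⟪v, X⟫ * ⟪u, Y⟫ := rfl

lemma fin3_mk2 (h : 2 < 3) : (⟨2, h⟩ : Fin 3) = 2 := rfl
lemma fin5_mk2 (h : 2 < 5) : (⟨2, h⟩ : Fin 5) = 2 := rfl
lemma fin5_mk3 (h : 3 < 5) : (⟨3, h⟩ : Fin 5) = 3 := rfl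
lemma fin5_mk4 (h : 4 < 5) : (⟨4, h⟩ : Fin 5) = 4 := rfl

lemma bilin_ext (b : OrthonormalBasis (Fin 5) ℝ V) {β γ : V →ₗ[ℝ] V →ₗ[ℝ] ℝ}
    (h : ∀ i j, β (b i) (b j) = γ (b i) (b j)) : β = γ := by
  apply b.toBasis.ext; intro i; apply b.toBasis.ext; intro j
  simpa [b.coe_toBasis] using h i j

def toOp (b : OrthonormalBasis (Fin 5) ℝ V) (β : V →ₗ[ℝ] V →ₗ[ℝ] ℝ) : V →ₗ[ℝ] V where
  toFun Y := ∑ j, β (b j) Y • b j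
  map_add' Y Z := by simp [add_smul, Finset.sum_add_distrib]
  map_smul' c Y := by simp [Finset.smul_sum, mul_smul]

lemma inner_toOp (b : OrthonormalBasis (Fin 5) ℝ V) (β : V →ₗ[ℝ] V →ₗ[ℝ] ℝ) (X Y : V) :
    ⟪X, toOp b β Y⟫ = β X Y := by
  have h : X = ∑ j, ⟪b j, X⟫ • b j := (b.sum_repr' X).symm
  rw [toOp]
  simp only [LinearMap.coe_mk, AddHom.coe_mk, inner_sum, real_inner_smul_right]
  conv_rhs => rw [h]
  simp [real_inner_smul_left, mul_comm, real_inner_comm]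

lemma sum_inner_eq_trace [FiniteDimensional ℝ V] (b : OrthonormalBasis (Fin 5) ℝ V)
    (T : V →ₗ[ℝ] V) : ∑ i, ⟪b i, T (b i)⟫ = LinearMap.trace ℝ V T := by
  rw [LinearMap.trace_eq_matrix_trace ℝ b.toBasis, Matrix.trace]
  congr 1; ext i
  rw [Matrix.diag_apply, LinearMap.toMatrix_apply, b.coe_toBasis, b.coe_toBasis_repr_apply,
    b.repr_apply_apply]

lemma sum_indep [FiniteDimensional ℝ V] (b₀ b : OrthonormalBasis (Fin 5) ℝ V)
    (β : V →ₗ[ℝ] V →ₗ[ℝ] ℝ) (φ : V →ₗ[ℝ] V) :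
    ∑ i, β (b i) (φ (b i)) = ∑ i, β (b₀ i) (φ (b₀ i)) := by
  have h : ∀ b' : OrthonormalBasis (Fin 5) ℝ V,
      ∑ i, β (b' i) (φ (b' i)) = LinearMap.trace ℝ V ((toOp b₀ β).comp φ) := by
    intro b'
    rw [← sum_inner_eq_trace b']
    simp [LinearMap.comp_apply, inner_toOp]
  rw [h b, h b₀]

set_option maxHeartbeats 2000000 in
lemma lambda2₃_finrank [FiniteDimensional ℝ V] (ξ : V) (φ : V →ₗ[ℝ] V)
    (b : OrthonormalBasis (Fin 5) ℝ V) (hb4 : b 4 = ξ)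
    (hb0 : φ (b 0) = b 1) (hb1 : φ (b 1) = -b 0) (hb2 : φ (b 2) = b 3) (hb3 : φ (b 3) = -b 2)
    (hφξ : φ ξ = 0) (hskew : ∀ X Z : V, ⟪φ X, Z⟫ = -⟪X, φ Z⟫) :
    finrank ℝ (Lambda2₃ φ) = 3 := by
  classical
  have hinner : ∀ i j, ⟪b i, b j⟫ = if i = j then (1:ℝ) else 0 :=
    orthonormal_iff_ite.mp b.orthonormal
  have hφb4 : φ (b 4) = 0 := by rw [hb4, hφξ]
  have hc0 : ∀ X, ⟪b 0, φ X⟫ = -⟪b 1, X⟫ := by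
    intro X
    have h := hskew X (b 0); rw [hb0] at h
    have c1 := real_inner_comm (b 0) (φ X); have c2 := real_inner_comm (b 1) X
    have c3 := real_inner_comm (φ X) (b 0); have c4 := real_inner_comm X (b 1)
    linarith
  have hc1 : ∀ X, ⟪b 1, φ X⟫ = ⟪b 0, X⟫ := by
    intro X
    have h := hskew X (b 1); rw [hb1] at h
    rw [inner_neg_right] at h
    have c1 := real_inner_comm (b 1) (φ X); have c2 := real_inner_comm (b 0) X
    have c3 := real_inner_comm (φ X) (b 1); have c4 := real_inner_comm X (b 0)
    linarith
  have hc2 : ∀ X, ⟪b 2, φ X⟫ = -⟪b 3, X⟫ := by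
    intro X
    have h := hskew X (b 2); rw [hb2] at h
    have c1 := real_inner_comm (b 2) (φ X); have c2 := real_inner_comm (b 3) X
    have c3 := real_inner_comm (φ X) (b 2); have c4 := real_inner_comm X (b 3)
    linarith
  have hc3 : ∀ X, ⟪b 3, φ X⟫ = ⟪b 2, X⟫ := by
    intro X
    have h := hskew X (b 3); rw [hb3] at h
    rw [inner_neg_right] at h
    have c1 := real_inner_comm (b 3) (φ X); have c2 := real_inner_comm (b 2) X
    have c3 := real_inner_comm (φ X) (b 3); have c4 := real_inner_comm X (b 2)
    linarith
  set f : Fin 3 → (V →ₗ[ℝ] V →ₗ[ℝ] ℝ) :=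
    ![wdg (b 0) (b 1) - wdg (b 2) (b 3), wdg (b 0) (b 2) + wdg (b 1) (b 3),
      wdg (b 0) (b 3) - wdg (b 1) (b 2)] with hfdef
  have hspan : Lambda2₃ φ = Submodule.span ℝ (Set.range f) := by
    apply le_antisymm
    · rintro β ⟨h1, h2, h3⟩
      have v4 : ∀ Y, β (b 4) Y = 0 := by
        intro Y
        have e := h2 (b 4) Y; rw [hφb4] at e
        simpa using e.symm
      have v13 : β (b 1) (b 3) = β (b 0) (b 2) := by
        have e := h2 (b 0) (b 2); rw [hb0, hb2] at e; exact e
      have v12 : β (b 1) (b 2) = -β (b 0) (b 3) := by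
        have e := h2 (b 0) (b 3); rw [hb0, hb3] at e
        simp only [map_neg] at e; linarith
      have v23 : β (b 2) (b 3) = -β (b 0) (b 1) := by
        have e := h3 b
        rw [Fin.sum_univ_five, hb0, hb1, hb2, hb3, hφb4] at e
        simp only [map_neg, map_zero] at e
        have a1 := h1 (b 1) (b 0); have a2 := h1 (b 3) (b 2)
        linarith
      have hrepr : β = β (b 0) (b 1) • f 0 + β (b 0) (b 2) • f 1 + β (b 0) (b 3) • f 2 := by
        apply bilin_ext b
        intro i j
        simp only [LinearMap.add_apply, LinearMap.smul_apply, LinearMap.sub_apply,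
          smul_eq_mul, hfdef]
        fin_cases i <;> fin_cases j <;>
          simp only [Fin.mk_zero, Fin.mk_one, fin5_mk2, fin5_mk3, fin5_mk4] <;>
          simp (config := { decide := true }) only [Matrix.cons_val_zero, Matrix.cons_val_one,
            Matrix.head_cons, Matrix.cons_val_two, Matrix.tail_cons, LinearMap.add_apply,
            LinearMap.sub_apply, LinearMap.smul_apply, smul_eq_mul, wdg_apply, hinner,
            if_true, if_false] <;>
          norm_num <;>
          linarith [v4 (b 0), v4 (b 1), v4 (b 2), v4 (b 3), v4 (b 4), v13, v12, v23,
            h1 (b 0) (b 0), h1 (b 1) (b 1), h1 (b 2) (b 2), h1 (b 3) (b 3), h1 (b 4) (b 4),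
            h1 (b 0) (b 1), h1 (b 0) (b 2), h1 (b 0) (b 3), h1 (b 1) (b 2), h1 (b 1) (b 3),
            h1 (b 2) (b 3), h1 (b 0) (b 4), h1 (b 1) (b 4), h1 (b 2) (b 4), h1 (b 3) (b 4)]
      rw [hrepr]
      refine Submodule.add_mem _ (Submodule.add_mem _ ?_ ?_) ?_ <;>
        exact Submodule.smul_mem _ _ (Submodule.subset_span (Set.mem_range_self _))
    · rw [Submodule.span_le]
      rintro - ⟨i, rfl⟩
      have key : ∀ k : Fin 3, f k ∈ Lambda2₃ φ := by
        intro k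
        refine ⟨fun X Y => ?_, fun X Y => ?_, fun b' => ?_⟩
        · fin_cases k <;>
            simp only [Fin.mk_zero, Fin.mk_one, fin3_mk2] <;>
            simp only [hfdef, Matrix.cons_val_zero, Matrix.cons_val_one, Matrix.head_cons,
              Matrix.cons_val_two, Matrix.tail_cons, LinearMap.add_apply, LinearMap.sub_apply,
              wdg_apply] <;> ring
        · fin_cases k <;>
            simp only [Fin.mk_zero, Fin.mk_one, fin3_mk2] <;>
            simp only [hfdef, Matrix.cons_val_zero, Matrix.cons_val_one, Matrix.head_cons,
              Matrix.cons_val_two, Matrix.tail_cons, LinearMap.add_apply, LinearMap.sub_apply,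
              wdg_apply, hc0, hc1, hc2, hc3] <;> ring
        · rw [sum_indep b b' (f k) φ, Fin.sum_univ_five, hb0, hb1, hb2, hb3, hφb4]
          fin_cases k <;>
            simp only [Fin.mk_zero, Fin.mk_one, fin3_mk2] <;>
            simp (config := { decide := true }) [hfdef, hinner]
      exact key i
  have hind : LinearIndependent ℝ f := by
    rw [Fintype.linearIndependent_iff (R := ℝ) (M := V →ₗ[ℝ] V →ₗ[ℝ] ℝ)]
    intro g hg
    have e0 : (∑ i, g i • f i) (b 0) (b 1) = 0 := by rw [hg]; simp
    have e1 : (∑ i, g i • f i) (b 0) (b 2) = 0 := by rw [hg]; simp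
    have e2 : (∑ i, g i • f i) (b 0) (b 3) = 0 := by rw [hg]; simp
    simp (config := { decide := true }) [hfdef, Fin.sum_univ_three, hinner] at e0 e1 e2
    intro i
    fin_cases i
    exacts [e0, e1, e2]
  rw [hspan, finrank_span_eq_card hind, Fintype.card_fin]


set_option maxHeartbeats 2000000 in
lemma lambda2₂_finrank [FiniteDimensional ℝ V] (ξ : V) (φ : V →ₗ[ℝ] V)
    (b : OrthonormalBasis (Fin 5) ℝ V) (hb4 : b 4 = ξ)
    (hb0 : φ (b 0) = b 1) (hb1 : φ (b 1) = -b 0) (hb2 : φ (b 2) = b 3) (hb3 : φ (b 3) = -b 2)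
    (hφξ : φ ξ = 0) (hskew : ∀ X Z : V, ⟪φ X, Z⟫ = -⟪X, φ Z⟫) :
    finrank ℝ (Lambda2₂ ξ φ) = 2 := by
  classical
  have hinner : ∀ i j, ⟪b i, b j⟫ = if i = j then (1:ℝ) else 0 :=
    orthonormal_iff_ite.mp b.orthonormal
  have hbξ : ∀ i : Fin 5, i ≠ 4 → ⟪b i, ξ⟫ = 0 := by
    intro i hi; rw [← hb4, hinner]; simp [hi]
  have hc0 : ∀ X, ⟪b 0, φ X⟫ = -⟪b 1, X⟫ := by
    intro X
    have h := hskew X (b 0); rw [hb0] at h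
    have c1 := real_inner_comm (b 0) (φ X); have c2 := real_inner_comm (b 1) X
    have c3 := real_inner_comm (φ X) (b 0); have c4 := real_inner_comm X (b 1)
    linarith
  have hc1 : ∀ X, ⟪b 1, φ X⟫ = ⟪b 0, X⟫ := by
    intro X
    have h := hskew X (b 1); rw [hb1] at h
    rw [inner_neg_right] at h
    have c1 := real_inner_comm (b 1) (φ X); have c2 := real_inner_comm (b 0) X
    have c3 := real_inner_comm (φ X) (b 1); have c4 := real_inner_comm X (b 0)
    linarith
  have hc2 : ∀ X, ⟪b 2, φ X⟫ = -⟪b 3, X⟫ := by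
    intro X
    have h := hskew X (b 2); rw [hb2] at h
    have c1 := real_inner_comm (b 2) (φ X); have c2 := real_inner_comm (b 3) X
    have c3 := real_inner_comm (φ X) (b 2); have c4 := real_inner_comm X (b 3)
    linarith
  have hc3 : ∀ X, ⟪b 3, φ X⟫ = ⟪b 2, X⟫ := by
    intro X
    have h := hskew X (b 3); rw [hb3] at h
    rw [inner_neg_right] at h
    have c1 := real_inner_comm (b 3) (φ X); have c2 := real_inner_comm (b 2) X
    have c3 := real_inner_comm (φ X) (b 3); have c4 := real_inner_comm X (b 2)
    linarith
  set f : Fin 2 → (V →ₗ[ℝ] V →ₗ[ℝ] ℝ) :=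
    ![wdg (b 0) (b 2) - wdg (b 1) (b 3), wdg (b 0) (b 3) + wdg (b 1) (b 2)] with hfdef
  have hspan : Lambda2₂ ξ φ = Submodule.span ℝ (Set.range f) := by
    apply le_antisymm
    · rintro β ⟨h1, h2, h3⟩
      have v4 : ∀ Y, β (b 4) Y = 0 := by intro Y; rw [hb4]; exact h2 Y
      have v01 : β (b 0) (b 1) = 0 := by
        have e := h3 (b 0) (b 1); rw [hb0, hb1] at e
        simp only [map_neg] at e
        have a := h1 (b 1) (b 0); linarith
      have v23 : β (b 2) (b 3) = 0 := by
        have e := h3 (b 2) (b 3); rw [hb2, hb3] at e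
        simp only [map_neg] at e
        have a := h1 (b 3) (b 2); linarith
      have v13 : β (b 1) (b 3) = -β (b 0) (b 2) := by
        have e := h3 (b 0) (b 2); rw [hb0, hb2] at e; exact e
      have v12 : β (b 1) (b 2) = β (b 0) (b 3) := by
        have e := h3 (b 0) (b 3); rw [hb0, hb3] at e
        simp only [map_neg] at e; linarith
      have hrepr : β = β (b 0) (b 2) • f 0 + β (b 0) (b 3) • f 1 := by
        apply bilin_ext b
        intro i j
        simp only [LinearMap.add_apply, LinearMap.smul_apply, LinearMap.sub_apply,
          smul_eq_mul, hfdef]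
        fin_cases i <;> fin_cases j <;>
          simp only [Fin.mk_zero, Fin.mk_one, fin5_mk2, fin5_mk3, fin5_mk4] <;>
          simp (config := { decide := true }) only [Matrix.cons_val_zero, Matrix.cons_val_one,
            Matrix.head_cons, LinearMap.add_apply, LinearMap.sub_apply, LinearMap.smul_apply,
            smul_eq_mul, wdg_apply, hinner, if_true, if_false] <;>
          norm_num <;>
          linarith [v4 (b 0), v4 (b 1), v4 (b 2), v4 (b 3), v4 (b 4), v01, v23, v13, v12,
            h1 (b 0) (b 0), h1 (b 1) (b 1), h1 (b 2) (b 2), h1 (b 3) (b 3), h1 (b 4) (b 4),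
            h1 (b 0) (b 1), h1 (b 0) (b 2), h1 (b 0) (b 3), h1 (b 1) (b 2), h1 (b 1) (b 3),
            h1 (b 2) (b 3), h1 (b 0) (b 4), h1 (b 1) (b 4), h1 (b 2) (b 4), h1 (b 3) (b 4)]
      rw [hrepr]
      exact Submodule.add_mem _
        (Submodule.smul_mem _ _ (Submodule.subset_span (Set.mem_range_self 0)))
        (Submodule.smul_mem _ _ (Submodule.subset_span (Set.mem_range_self 1)))
    · rw [Submodule.span_le]
      rintro - ⟨i, rfl⟩
      have m0 : f 0 ∈ Lambda2₂ ξ φ := by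
        refine ⟨fun X Y => ?_, fun X => ?_, fun X Y => ?_⟩ <;>
          simp only [hfdef, Matrix.cons_val_zero, LinearMap.sub_apply, wdg_apply]
        · ring
        · rw [hbξ 0 (by decide), hbξ 1 (by decide), hbξ 2 (by decide), hbξ 3 (by decide)]; ring
        · rw [hc0, hc1, hc2, hc3, hc0, hc1, hc2, hc3]; ring
      have m1 : f 1 ∈ Lambda2₂ ξ φ := by
        refine ⟨fun X Y => ?_, fun X => ?_, fun X Y => ?_⟩ <;>
          simp only [hfdef, Matrix.cons_val_one, Matrix.head_cons, Matrix.cons_val_zero, LinearMap.add_apply, wdg_apply]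
        · ring
        · rw [hbξ 0 (by decide), hbξ 1 (by decide), hbξ 2 (by decide), hbξ 3 (by decide)]; ring
        · rw [hc0, hc1, hc2, hc3, hc0, hc1, hc2, hc3]; ring
      fin_cases i
      exacts [m0, m1]
  have hind : LinearIndependent ℝ f := by
    rw [Fintype.linearIndependent_iff (R := ℝ) (M := V →ₗ[ℝ] V →ₗ[ℝ] ℝ)]
    intro g hg
    have e0 : (∑ i, g i • f i) (b 0) (b 2) = 0 := by rw [hg]; simp
    have e1 : (∑ i, g i • f i) (b 0) (b 3) = 0 := by rw [hg]; simp
    simp (config := { decide := true }) [hfdef, Fin.sum_univ_two, hinner] at e0 e1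
    intro i
    fin_cases i
    exacts [e0, e1]
  rw [hspan, finrank_span_eq_card hind, Fintype.card_fin]


set_option maxHeartbeats 2000000 in
lemma lambda4_finrank [FiniteDimensional ℝ V] (ξ : V)
    (b : OrthonormalBasis (Fin 5) ℝ V) (hb4 : b 4 = ξ) :
    finrank ℝ (Lambda2₄ ξ) = 4 := by
  classical
  have hinner : ∀ i j, ⟪b i, b j⟫ = if i = j then (1:ℝ) else 0 :=
    orthonormal_iff_ite.mp b.orthonormal
  set f : Fin 4 → (V →ₗ[ℝ] V →ₗ[ℝ] ℝ) :=
    ![wdg (b 4) (b 0), wdg (b 4) (b 1), wdg (b 4) (b 2), wdg (b 4) (b 3)] with hfdef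
  have hspan : Lambda2₄ ξ = Submodule.span ℝ (Set.range f) := by
    apply le_antisymm
    · intro β hβ
      obtain ⟨h1, h2⟩ := hβ
      have v4 : ∀ j : Fin 5, j ≠ 4 → ∀ k : Fin 5, k ≠ 4 → β (b j) (b k) = 0 := by
        intro j hj k hk
        refine h2 _ _ ?_ ?_ <;> rw [← hb4]
        · rw [hinner]; simp [hj]
        · rw [hinner]; simp [hk]
      have hrepr : β = β (b 4) (b 0) • f 0 + β (b 4) (b 1) • f 1
          + β (b 4) (b 2) • f 2 + β (b 4) (b 3) • f 3 := by
        apply bilin_ext b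
        intro i j
        simp only [LinearMap.add_apply, LinearMap.smul_apply, smul_eq_mul, hfdef]
        fin_cases i <;> fin_cases j <;>
          simp only [Fin.mk_zero, Fin.mk_one, fin5_mk2, fin5_mk3, fin5_mk4] <;>
          simp (config := { decide := true }) only [Matrix.cons_val_zero, Matrix.cons_val_one,
            Matrix.head_cons, Matrix.cons_val_two, Matrix.tail_cons, Matrix.cons_val_three,
            Matrix.cons_val_four, wdg_apply, hinner, if_true, if_false] <;>
          norm_num <;>
          first
            | linarith [v4 0 (by decide) 0 (by decide), v4 0 (by decide) 1 (by decide),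
                v4 0 (by decide) 2 (by decide), v4 0 (by decide) 3 (by decide),
                v4 1 (by decide) 0 (by decide), v4 1 (by decide) 1 (by decide),
                v4 1 (by decide) 2 (by decide), v4 1 (by decide) 3 (by decide),
                v4 2 (by decide) 0 (by decide), v4 2 (by decide) 1 (by decide),
                v4 2 (by decide) 2 (by decide), v4 2 (by decide) 3 (by decide),
                v4 3 (by decide) 0 (by decide), v4 3 (by decide) 1 (by decide),
                v4 3 (by decide) 2 (by decide), v4 3 (by decide) 3 (by decide),
                h1 (b 0) (b 4), h1 (b 1) (b 4), h1 (b 2) (b 4), h1 (b 3) (b 4),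
                h1 (b 4) (b 4)]
      rw [hrepr]
      refine Submodule.add_mem _ (Submodule.add_mem _ (Submodule.add_mem _ ?_ ?_) ?_) ?_ <;>
        exact Submodule.smul_mem _ _ (Submodule.subset_span (Set.mem_range_self _))
    · rw [Submodule.span_le]
      rintro - ⟨i, rfl⟩
      have hmem : ∀ k : Fin 5, k ≠ 4 → wdg (b 4) (b k) ∈ Lambda2₄ ξ := by
        intro k hk
        constructor
        · intro X Y; simp only [wdg_apply]; ring
        · intro X Y hX hY
          simp only [wdg_apply]
          rw [real_inner_comm X (b 4), real_inner_comm Y (b 4), hb4, hX, hY]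
          ring
      fin_cases i <;> simp only [hfdef, Matrix.cons_val_zero, Matrix.cons_val_one,
        Matrix.head_cons, Matrix.cons_val_two, Matrix.tail_cons, Matrix.cons_val_three] <;>
        exact hmem _ (by decide)
  have hind : LinearIndependent ℝ f := by
    rw [Fintype.linearIndependent_iff (R := ℝ) (M := V →ₗ[ℝ] V →ₗ[ℝ] ℝ)]
    intro g hg
    have happ : ∀ k : Fin 5, (∑ i, g i • f i) (b 4) (b k) = 0 := by
      intro k; rw [hg]; simp
    have e0 := happ 0
    have e1 := happ 1
    have e2 := happ 2
    have e3 := happ 3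
    simp (config := { decide := true }) [hfdef, Fin.sum_univ_four, hinner] at e0 e1 e2 e3
    intro i
    fin_cases i
    exacts [e0, e1, e2, e3]
  rw [hspan, finrank_span_eq_card hind, Fintype.card_fin]


lemma traceform (b' : OrthonormalBasis (Fin 5) ℝ V) [FiniteDimensional ℝ V]
    (ξ : V) (φ : V →ₗ[ℝ] V)
    (b : OrthonormalBasis (Fin 5) ℝ V) (hb4 : b 4 = ξ)
    (hb0 : φ (b 0) = b 1) (hb1 : φ (b 1) = -b 0) (hb2 : φ (b 2) = b 3) (hb3 : φ (b 3) = -b 2)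
    (hφξ : φ ξ = 0) :
    ∑ i, fundForm φ (b' i) (φ (b' i)) = -4 := by
  have hinner : ∀ i j, ⟪b i, b j⟫ = if i = j then (1:ℝ) else 0 :=
    orthonormal_iff_ite.mp b.orthonormal
  have hφb4 : φ (b 4) = 0 := by rw [hb4, hφξ]
  rw [sum_indep b b' (fundForm φ) φ, Fin.sum_univ_five]
  rw [show fundForm φ (b 0) (φ (b 0)) = -1 by
    simp only [fundForm_apply, hb0, hb1, inner_neg_right, hinner]; norm_num]
  rw [show fundForm φ (b 1) (φ (b 1)) = -1 by
    simp only [fundForm_apply, hb1, map_neg, hb0, inner_neg_right, hinner]; norm_num]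
  rw [show fundForm φ (b 2) (φ (b 2)) = -1 by
    simp only [fundForm_apply, hb2, hb3, inner_neg_right, hinner]; norm_num]
  rw [show fundForm φ (b 3) (φ (b 3)) = -1 by
    simp only [fundForm_apply, hb3, map_neg, hb2, inner_neg_right, hinner]; norm_num]
  rw [show fundForm φ (b 4) (φ (b 4)) = 0 by simp [hφb4]]
  norm_num

lemma lambda1_finrank [FiniteDimensional ℝ V] (φ : V →ₗ[ℝ] V)
    (b : OrthonormalBasis (Fin 5) ℝ V) (hb1 : φ (b 1) = -b 0) :
    Module.finrank ℝ (Lambda2₁ φ) = 1 := by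
  have hinner : ∀ i j, ⟪b i, b j⟫ = if i = j then (1:ℝ) else 0 :=
    orthonormal_iff_ite.mp b.orthonormal
  have hne : fundForm φ ≠ 0 := by
    intro h
    have e : fundForm φ (b 0) (b 1) = 0 := by rw [h]; rfl
    rw [fundForm_apply, hb1, inner_neg_right, hinner] at e
    norm_num at e
  exact finrank_span_singleton (K := ℝ) (V := V →ₗ[ℝ] V →ₗ[ℝ] ℝ) hne

lemma indep_zero [FiniteDimensional ℝ V] (ξ : V) (φ : V →ₗ[ℝ] V)
    (hξ : ⟪ξ, ξ⟫ = 1) (hφξ : φ ξ = 0)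
    (hφ2 : ∀ X : V, φ (φ X) = -X + ⟪X, ξ⟫ • ξ)
    (hmetric : ∀ X Y : V, ⟪φ X, φ Y⟫ = ⟪X, Y⟫ - ⟪X, ξ⟫ * ⟪Y, ξ⟫)
    (hηφ : ∀ X : V, ⟪φ X, ξ⟫ = 0)
    (b : OrthonormalBasis (Fin 5) ℝ V) (hb4 : b 4 = ξ)
    (hb0 : φ (b 0) = b 1) (hb1 : φ (b 1) = -b 0) (hb2 : φ (b 2) = b 3) (hb3 : φ (b 3) = -b 2)
    (β₁ β₂ β₃ β₄ : V →ₗ[ℝ] V →ₗ[ℝ] ℝ)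
    (m1 : β₁ ∈ Lambda2₁ φ) (m2 : β₂ ∈ Lambda2₂ ξ φ) (m3 : β₃ ∈ Lambda2₃ φ)
    (m4 : β₄ ∈ Lambda2₄ ξ) (hsum : β₁ + β₂ + β₃ + β₄ = 0) :
    β₁ = 0 ∧ β₂ = 0 ∧ β₃ = 0 ∧ β₄ = 0 := by
  obtain ⟨t, rfl⟩ := Submodule.mem_span_singleton.mp m1
  obtain ⟨a1, a2, a3⟩ := m2
  obtain ⟨c1, c2, c3⟩ := m3
  obtain ⟨d1, d2⟩ := m4
  have hc4 : ∀ X, β₃ ξ X = 0 := by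
    intro X
    have e := c2 ξ X; rw [hφξ] at e; simpa using e.symm
  have happ : ∀ X Y, t * fundForm φ X Y + β₂ X Y + β₃ X Y + β₄ X Y = 0 := by
    intro X Y
    have e := DFunLike.congr_fun (DFunLike.congr_fun hsum X) Y
    simpa using e
  have h4ξ : ∀ X, β₄ ξ X = 0 := by
    intro X
    have e := happ ξ X
    rw [phi_xi ξ φ hηφ X, a2 X, hc4 X] at e; linarith
  have h4ξ' : ∀ X, β₄ X ξ = 0 := by
    intro X; rw [d1, h4ξ]; ring
  have h4 : β₄ = 0 := by
    apply LinearMap.ext; intro X; apply LinearMap.ext; intro Y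
    simp only [LinearMap.zero_apply]
    have hX : ⟪X - ⟪X, ξ⟫ • ξ, ξ⟫ = 0 := by
      rw [inner_sub_left, real_inner_smul_left, hξ]; ring
    have hY : ⟪Y - ⟪Y, ξ⟫ • ξ, ξ⟫ = 0 := by
      rw [inner_sub_left, real_inner_smul_left, hξ]; ring
    have e0 := d2 _ _ hX hY
    have eX : X = (X - ⟪X, ξ⟫ • ξ) + ⟪X, ξ⟫ • ξ := by abel
    have eY : Y = (Y - ⟪Y, ξ⟫ • ξ) + ⟪Y, ξ⟫ • ξ := by abel
    conv_lhs => rw [eX, eY]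
    simp only [map_add, map_smul, LinearMap.add_apply, LinearMap.smul_apply, smul_eq_mul,
      e0, h4ξ, h4ξ']
    ring
  have hdiag2 : ∀ X, β₂ X (φ X) = 0 := by
    intro X
    have e := a3 X (φ X)
    rw [hφ2 X] at e
    have e2 : β₂ (φ X) ξ = 0 := by rw [a1, a2]; ring
    have e3 := a1 (φ X) X
    simp only [map_add, map_neg, map_smul, smul_eq_mul] at e
    rw [e2] at e
    linarith
  have ht : t = 0 := by
    have e : ∑ i, (t • fundForm φ + β₂ + β₃ + β₄) (b i) (φ (b i)) = 0 := by
      rw [hsum]; simp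
    simp only [LinearMap.add_apply, LinearMap.smul_apply, smul_eq_mul, h4,
      LinearMap.zero_apply, add_zero] at e
    rw [Finset.sum_add_distrib, Finset.sum_add_distrib, ← Finset.mul_sum] at e
    have hb2sum : ∑ i, β₂ (b i) (φ (b i)) = 0 := by
      simp [hdiag2]
    rw [hb2sum, c3 b, traceform b ξ φ b hb4 hb0 hb1 hb2 hb3 hφξ] at e
    linarith
  refine ⟨by rw [ht, zero_smul], ?_, ?_, h4⟩
  · apply LinearMap.ext; intro X; apply LinearMap.ext; intro Y
    simp only [LinearMap.zero_apply]
    have e1 := happ X Y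
    have e2 := happ (φ X) (φ Y)
    rw [a3, c2, phi_inv ξ φ hηφ hmetric X Y] at e2
    rw [ht] at e1 e2
    rw [h4] at e1 e2
    simp only [LinearMap.zero_apply] at e1 e2
    linarith
  · apply LinearMap.ext; intro X; apply LinearMap.ext; intro Y
    simp only [LinearMap.zero_apply]
    have e1 := happ X Y
    have e2 := happ (φ X) (φ Y)
    rw [a3, c2, phi_inv ξ φ hηφ hmetric X Y] at e2
    rw [ht] at e1 e2
    rw [h4] at e1 e2
    simp only [LinearMap.zero_apply] at e1 e2
    linarith

def beta4 (ξ : V) (β : V →ₗ[ℝ] V →ₗ[ℝ] ℝ) : V →ₗ[ℝ] V →ₗ[ℝ] ℝ :=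
  LinearMap.mk₂ ℝ (fun X Y => ⟪X, ξ⟫ * β ξ Y - ⟪Y, ξ⟫ * β ξ X)
    (fun X X' Y => by simp [inner_add_left, map_add]; ring)
    (fun c X Y => by simp [real_inner_smul_left, map_smul]; ring)
    (fun X Y Y' => by simp [inner_add_left, map_add]; ring)
    (fun c X Y => by simp [real_inner_smul_left, map_smul]; ring)

@[simp] lemma beta4_apply (ξ : V) (β : V →ₗ[ℝ] V →ₗ[ℝ] ℝ) (X Y : V) :
    beta4 ξ β X Y = ⟪X, ξ⟫ * β ξ Y - ⟪Y, ξ⟫ * β ξ X := rfl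

def cphi (φ : V →ₗ[ℝ] V) (γ : V →ₗ[ℝ] V →ₗ[ℝ] ℝ) : V →ₗ[ℝ] V →ₗ[ℝ] ℝ :=
  LinearMap.mk₂ ℝ (fun X Y => γ (φ X) (φ Y))
    (fun X X' Y => by simp [map_add])
    (fun c X Y => by simp [map_smul])
    (fun X Y Y' => by simp [map_add])
    (fun c X Y => by simp [map_smul])

@[simp] lemma cphi_apply (φ : V →ₗ[ℝ] V) (γ : V →ₗ[ℝ] V →ₗ[ℝ] ℝ) (X Y : V) :
    cphi φ γ X Y = γ (φ X) (φ Y) := rfl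

lemma exists_decomp [FiniteDimensional ℝ V] (ξ : V) (φ : V →ₗ[ℝ] V)
    (hξ : ⟪ξ, ξ⟫ = 1) (hφξ : φ ξ = 0)
    (hφ2 : ∀ X : V, φ (φ X) = -X + ⟪X, ξ⟫ • ξ)
    (hmetric : ∀ X Y : V, ⟪φ X, φ Y⟫ = ⟪X, Y⟫ - ⟪X, ξ⟫ * ⟪Y, ξ⟫)
    (hηφ : ∀ X : V, ⟪φ X, ξ⟫ = 0)
    (hskew : ∀ X Z : V, ⟪φ X, Z⟫ = -⟪X, φ Z⟫)
    (b : OrthonormalBasis (Fin 5) ℝ V) (hb4 : b 4 = ξ)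
    (hb0 : φ (b 0) = b 1) (hb1 : φ (b 1) = -b 0) (hb2 : φ (b 2) = b 3) (hb3 : φ (b 3) = -b 2)
    (β : V →ₗ[ℝ] V →ₗ[ℝ] ℝ) (hβ : ∀ X Y : V, β X Y = -β Y X) :
    ∃ β₁ β₂ β₃ β₄ : V →ₗ[ℝ] V →ₗ[ℝ] ℝ, β₁ ∈ Lambda2₁ φ ∧ β₂ ∈ Lambda2₂ ξ φ
      ∧ β₃ ∈ Lambda2₃ φ ∧ β₄ ∈ Lambda2₄ ξ ∧ β = β₁ + β₂ + β₃ + β₄ := by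
  have hβξξ : β ξ ξ = 0 := by have := hβ ξ ξ; linarith
  set γ : V →ₗ[ℝ] V →ₗ[ℝ] ℝ := β - beta4 ξ β with hγdef
  have hγ_apply : ∀ X Y, γ X Y = β X Y - (⟪X, ξ⟫ * β ξ Y - ⟪Y, ξ⟫ * β ξ X) := by
    intro X Y; simp [hγdef]
  have hγalt : ∀ X Y, γ X Y = -γ Y X := by
    intro X Y; rw [hγ_apply, hγ_apply, hβ X Y]; ring
  have hγξ : ∀ Y, γ ξ Y = 0 := by
    intro Y; rw [hγ_apply, hξ, hβξξ]; ring
  have hγξ' : ∀ X, γ X ξ = 0 := by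
    intro X; rw [hγalt, hγξ]; ring
  have hγφ2 : ∀ X Y, γ (φ (φ X)) (φ (φ Y)) = γ X Y := by
    intro X Y
    rw [hφ2 X, hφ2 Y]
    simp only [map_add, map_neg, map_smul, LinearMap.add_apply, LinearMap.neg_apply,
      LinearMap.smul_apply, smul_eq_mul, hγξ, hγξ', neg_neg, mul_zero, add_zero, neg_zero,
      zero_add]
  set β₂ : V →ₗ[ℝ] V →ₗ[ℝ] ℝ := (1/2 : ℝ) • (γ - cphi φ γ) with hβ₂def
  set βp : V →ₗ[ℝ] V →ₗ[ℝ] ℝ := (1/2 : ℝ) • (γ + cphi φ γ) with hβpdef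
  have hβ₂_apply : ∀ X Y, β₂ X Y = (1/2) * (γ X Y - γ (φ X) (φ Y)) := by
    intro X Y; simp [hβ₂def]; try ring
  have hβp_apply : ∀ X Y, βp X Y = (1/2) * (γ X Y + γ (φ X) (φ Y)) := by
    intro X Y; simp [hβpdef]; try ring
  set t : ℝ := -(∑ i, βp (b i) (φ (b i))) / 4 with htdef
  set β₁ : V →ₗ[ℝ] V →ₗ[ℝ] ℝ := t • fundForm φ with hβ₁def
  set β₃ : V →ₗ[ℝ] V →ₗ[ℝ] ℝ := βp - β₁ with hβ₃def
  have hβ₃_apply : ∀ X Y, β₃ X Y = βp X Y - t * fundForm φ X Y := by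
    intro X Y; simp [hβ₃def, hβ₁def]
  refine ⟨β₁, β₂, β₃, beta4 ξ β, Submodule.mem_span_singleton.mpr ⟨t, rfl⟩, ?_, ?_, ?_, ?_⟩
  · -- β₂ ∈ Λ₂
    refine ⟨fun X Y => ?_, fun X => ?_, fun X Y => ?_⟩
    · rw [hβ₂_apply, hβ₂_apply, hγalt X Y, hγalt (φ X) (φ Y)]; ring
    · rw [hβ₂_apply, hγξ, hφξ]
      simp
    · rw [hβ₂_apply, hβ₂_apply, hγφ2]; ring
  · -- β₃ ∈ Λ₃
    have hβp_inv : ∀ X Y, βp (φ X) (φ Y) = βp X Y := by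
      intro X Y; rw [hβp_apply, hβp_apply, hγφ2]; ring
    have hβp_alt : ∀ X Y, βp X Y = -βp Y X := by
      intro X Y; rw [hβp_apply, hβp_apply, hγalt X Y, hγalt (φ X) (φ Y)]; ring
    refine ⟨fun X Y => ?_, fun X Y => ?_, fun b' => ?_⟩
    · rw [hβ₃_apply, hβ₃_apply, hβp_alt X Y, phi_alt φ hskew X Y]; ring
    · rw [hβ₃_apply, hβ₃_apply, hβp_inv, phi_inv ξ φ hηφ hmetric X Y]
    · have e : ∀ i, β₃ (b' i) (φ (b' i))
          = βp (b' i) (φ (b' i)) - t * fundForm φ (b' i) (φ (b' i)) := fun i => hβ₃_apply _ _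
      rw [Finset.sum_congr rfl (fun i _ => e i), Finset.sum_sub_distrib, ← Finset.mul_sum]
      rw [traceform b' ξ φ b hb4 hb0 hb1 hb2 hb3 hφξ]
      rw [sum_indep b b' βp φ, htdef]
      ring
  · -- β₄ ∈ Λ₄
    refine ⟨fun X Y => ?_, fun X Y hX hY => ?_⟩
    · simp only [beta4_apply]; ring
    · simp only [beta4_apply, hX, hY]; ring
  · -- sum
    apply LinearMap.ext; intro X; apply LinearMap.ext; intro Y
    simp only [LinearMap.add_apply]
    rw [hβ₃_apply, hβ₂_apply, hβp_apply, hβ₁def]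
    simp only [LinearMap.smul_apply, smul_eq_mul, hγ_apply, beta4_apply]
    ring

end Helpers

set_option maxHeartbeats 4000000

/-- The `U(2)`-decomposition `Λ² = Λ²₁ ⊕ Λ²₂ ⊕ Λ²₃ ⊕ Λ²₄`: for an almost contact metric
structure `(ξ, η, φ)` on a 5-dimensional real inner product space `V`, the 10-dimensional
space of alternating bilinear forms on `V` is the internal direct sum of the four subspaces
`Λ²₁, Λ²₂, Λ²₃, Λ²₄`, of dimensions `1, 2, 3, 4`. -/
theorem lambda2_direct_sum_decomposition {V : Type*} [NormedAddCommGroup V]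
    [InnerProductSpace ℝ V] [FiniteDimensional ℝ V] (hdim : Module.finrank ℝ V = 5)
    (ξ : V) (φ : V →ₗ[ℝ] V)
    (hξ : ⟪ξ, ξ⟫ = 1)
    (hφξ : φ ξ = 0)
    (hφ2 : ∀ X : V, φ (φ X) = -X + ⟪X, ξ⟫ • ξ)
    (hmetric : ∀ X Y : V, ⟪φ X, φ Y⟫ = ⟪X, Y⟫ - ⟪X, ξ⟫ * ⟪Y, ξ⟫) :
    Module.finrank ℝ (Lambda2 V) = 10
      ∧ Module.finrank ℝ (Lambda2₁ φ) = 1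
      ∧ Module.finrank ℝ (Lambda2₂ ξ φ) = 2
      ∧ Module.finrank ℝ (Lambda2₃ φ) = 3
      ∧ Module.finrank ℝ (Lambda2₄ ξ) = 4
      ∧ ∀ β ∈ Lambda2 V,
          ∃! q : Lambda2₁ φ × Lambda2₂ ξ φ × Lambda2₃ φ × Lambda2₄ ξ,
            β = ↑q.1 + ↑q.2.1 + ↑q.2.2.1 + ↑q.2.2.2 := by
  classical
  have hηφ : ∀ X : V, ⟪φ X, ξ⟫ = 0 := eta_phi ξ φ hξ hφ2 hmetric
  have hskew : ∀ X Z : V, ⟪φ X, Z⟫ = -⟪X, φ Z⟫ := phi_skew ξ φ hφ2 hmetric hηφ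
  obtain ⟨b, hb4, hb0, hb1, hb2, hb3⟩ := exists_adapted hdim ξ φ hξ hφξ hφ2 hmetric hηφ hskew
  have hr1 : Module.finrank ℝ (Lambda2₁ φ) = 1 := lambda1_finrank φ b hb1
  have hr2 : Module.finrank ℝ (Lambda2₂ ξ φ) = 2 :=
    lambda2₂_finrank ξ φ b hb4 hb0 hb1 hb2 hb3 hφξ hskew
  have hr3 : Module.finrank ℝ (Lambda2₃ φ) = 3 :=
    lambda2₃_finrank ξ φ b hb4 hb0 hb1 hb2 hb3 hφξ hskew
  have hr4 : Module.finrank ℝ (Lambda2₄ ξ) = 4 := lambda4_finrank ξ b hb4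
  have hzero : ∀ β₁ β₂ β₃ β₄ : V →ₗ[ℝ] V →ₗ[ℝ] ℝ, β₁ ∈ Lambda2₁ φ → β₂ ∈ Lambda2₂ ξ φ →
      β₃ ∈ Lambda2₃ φ → β₄ ∈ Lambda2₄ ξ → β₁ + β₂ + β₃ + β₄ = 0 →
      β₁ = 0 ∧ β₂ = 0 ∧ β₃ = 0 ∧ β₄ = 0 :=
    fun β₁ β₂ β₃ β₄ m1 m2 m3 m4 hsum =>
      indep_zero ξ φ hξ hφξ hφ2 hmetric hηφ b hb4 hb0 hb1 hb2 hb3 β₁ β₂ β₃ β₄ m1 m2 m3 m4 hsum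
  have hex : ∀ β ∈ Lambda2 V, ∃ β₁ β₂ β₃ β₄ : V →ₗ[ℝ] V →ₗ[ℝ] ℝ,
      β₁ ∈ Lambda2₁ φ ∧ β₂ ∈ Lambda2₂ ξ φ ∧ β₃ ∈ Lambda2₃ φ ∧ β₄ ∈ Lambda2₄ ξ
      ∧ β = β₁ + β₂ + β₃ + β₄ :=
    fun β hβ => exists_decomp ξ φ hξ hφξ hφ2 hmetric hηφ hskew b hb4 hb0 hb1 hb2 hb3 β hβ
  have hsub1 : Lambda2₁ φ ≤ Lambda2 V := by
    rw [Lambda2₁, Submodule.span_le, Set.singleton_subset_iff]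
    exact fun X Y => phi_alt φ hskew X Y
  have hsub2 : Lambda2₂ ξ φ ≤ Lambda2 V := fun β hβ => hβ.1
  have hsub3 : Lambda2₃ φ ≤ Lambda2 V := fun β hβ => hβ.1
  have hsub4 : Lambda2₄ ξ ≤ Lambda2 V := fun β hβ => hβ.1
  have hsupEq : Lambda2 V = Lambda2₁ φ ⊔ (Lambda2₂ ξ φ ⊔ (Lambda2₃ φ ⊔ Lambda2₄ ξ)) := by
    apply le_antisymm
    · intro β hβ
      obtain ⟨β₁, β₂, β₃, β₄, m1, m2, m3, m4, hs⟩ := hex β hβ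
      have l1 : Lambda2₁ φ ≤ Lambda2₁ φ ⊔ (Lambda2₂ ξ φ ⊔ (Lambda2₃ φ ⊔ Lambda2₄ ξ)) :=
        le_sup_left
      have l2 : Lambda2₂ ξ φ ≤ Lambda2₁ φ ⊔ (Lambda2₂ ξ φ ⊔ (Lambda2₃ φ ⊔ Lambda2₄ ξ)) :=
        le_trans le_sup_left le_sup_right
      have l3 : Lambda2₃ φ ≤ Lambda2₁ φ ⊔ (Lambda2₂ ξ φ ⊔ (Lambda2₃ φ ⊔ Lambda2₄ ξ)) :=
        le_trans le_sup_left (le_trans le_sup_right le_sup_right)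
      have l4 : Lambda2₄ ξ ≤ Lambda2₁ φ ⊔ (Lambda2₂ ξ φ ⊔ (Lambda2₃ φ ⊔ Lambda2₄ ξ)) :=
        le_trans le_sup_right (le_trans le_sup_right le_sup_right)
      rw [hs]
      exact add_mem (add_mem (add_mem (l1 m1) (l2 m2)) (l3 m3)) (l4 m4)
    · exact sup_le hsub1 (sup_le hsub2 (sup_le hsub3 hsub4))
  have i34 : Lambda2₃ φ ⊓ Lambda2₄ ξ = ⊥ := by
    rw [eq_bot_iff]
    rintro x ⟨hx3, hx4⟩
    have h := hzero 0 0 x (-x) (zero_mem _) (zero_mem _) hx3 (Submodule.neg_mem (R := ℝ) (M := V →ₗ[ℝ] V →ₗ[ℝ] ℝ) _ hx4) (by abel)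
    simpa using h.2.2.1
  have i234 : Lambda2₂ ξ φ ⊓ (Lambda2₃ φ ⊔ Lambda2₄ ξ) = ⊥ := by
    rw [eq_bot_iff]
    rintro x ⟨hx2, hx34⟩
    obtain ⟨c, hc, d, hd, hcd⟩ := Submodule.mem_sup.mp hx34
    have h := hzero 0 x (-c) (-d) (zero_mem _) hx2 (Submodule.neg_mem (R := ℝ) (M := V →ₗ[ℝ] V →ₗ[ℝ] ℝ) _ hc) (Submodule.neg_mem (R := ℝ) (M := V →ₗ[ℝ] V →ₗ[ℝ] ℝ) _ hd)
      (by rw [← hcd]; abel)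
    simpa using h.2.1
  have i1234 : Lambda2₁ φ ⊓ (Lambda2₂ ξ φ ⊔ (Lambda2₃ φ ⊔ Lambda2₄ ξ)) = ⊥ := by
    rw [eq_bot_iff]
    rintro x ⟨hx1, hxr⟩
    obtain ⟨a, ha, y, hy, hay⟩ := Submodule.mem_sup.mp hxr
    obtain ⟨c, hc, d, hd, hcd⟩ := Submodule.mem_sup.mp hy
    have h := hzero x (-a) (-c) (-d) hx1 (Submodule.neg_mem (R := ℝ) (M := V →ₗ[ℝ] V →ₗ[ℝ] ℝ) _ ha) (Submodule.neg_mem (R := ℝ) (M := V →ₗ[ℝ] V →ₗ[ℝ] ℝ) _ hc) (Submodule.neg_mem (R := ℝ) (M := V →ₗ[ℝ] V →ₗ[ℝ] ℝ) _ hd)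
      (by rw [← hay, ← hcd]; abel)
    simpa using h.1
  have f34 : Module.finrank ℝ ↥(Lambda2₃ φ ⊔ Lambda2₄ ξ) = 7 := by
    have h := Submodule.finrank_sup_add_finrank_inf_eq (K := ℝ) (V := V →ₗ[ℝ] V →ₗ[ℝ] ℝ) (Lambda2₃ φ) (Lambda2₄ ξ)
    rw [i34, hr3, hr4, finrank_bot] at h
    omega
  have f234 : Module.finrank ℝ ↥(Lambda2₂ ξ φ ⊔ (Lambda2₃ φ ⊔ Lambda2₄ ξ)) = 9 := by
    set_option synthInstance.maxHeartbeats 1000000 in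
    have h := Submodule.finrank_sup_add_finrank_inf_eq (K := ℝ) (V := V →ₗ[ℝ] V →ₗ[ℝ] ℝ) (Lambda2₂ ξ φ) (Lambda2₃ φ ⊔ Lambda2₄ ξ)
    rw [i234, hr2, f34, finrank_bot] at h
    omega
  have f1234 : Module.finrank ℝ (Lambda2 V) = 10 := by
    set_option synthInstance.maxHeartbeats 1000000 in
    have h := Submodule.finrank_sup_add_finrank_inf_eq (K := ℝ) (V := V →ₗ[ℝ] V →ₗ[ℝ] ℝ) (Lambda2₁ φ)
      (Lambda2₂ ξ φ ⊔ (Lambda2₃ φ ⊔ Lambda2₄ ξ))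
    rw [i1234, hr1, f234, finrank_bot] at h
    rw [hsupEq]
    omega
  refine ⟨f1234, hr1, hr2, hr3, hr4, ?_⟩
  intro β hβ
  obtain ⟨β₁, β₂, β₃, β₄, m1, m2, m3, m4, hs⟩ := hex β hβ
  refine ⟨⟨⟨β₁, m1⟩, ⟨β₂, m2⟩, ⟨β₃, m3⟩, ⟨β₄, m4⟩⟩, hs, ?_⟩
  rintro ⟨⟨a1, n1⟩, ⟨a2, n2⟩, ⟨a3, n3⟩, ⟨a4, n4⟩⟩ h'
  simp only at h'
  have hsum0 : (a1 - β₁) + (a2 - β₂) + (a3 - β₃) + (a4 - β₄) = 0 := by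
    have e : (a1 - β₁) + (a2 - β₂) + (a3 - β₃) + (a4 - β₄)
        = (a1 + a2 + a3 + a4) - (β₁ + β₂ + β₃ + β₄) := by abel
    rw [e, ← h', ← hs, sub_self (G := V →ₗ[ℝ] V →ₗ[ℝ] ℝ)]
  have hz := hzero (a1 - β₁) (a2 - β₂) (a3 - β₃) (a4 - β₄)
    (Submodule.sub_mem (R := ℝ) (M := V →ₗ[ℝ] V →ₗ[ℝ] ℝ) _ n1 m1) (Submodule.sub_mem (R := ℝ) (M := V →ₗ[ℝ] V →ₗ[ℝ] ℝ) _ n2 m2) (Submodule.sub_mem (R := ℝ) (M := V →ₗ[ℝ] V →ₗ[ℝ] ℝ) _ n3 m3) (Submodule.sub_mem (R := ℝ) (M := V →ₗ[ℝ] V →ₗ[ℝ] ℝ) _ n4 m4) hsum0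
  obtain ⟨z1, z2, z3, z4⟩ := hz
  have e1 : a1 = β₁ := sub_eq_zero.mp z1
  have e2 : a2 = β₂ := sub_eq_zero.mp z2
  have e3 : a3 = β₃ := sub_eq_zero.mp z3
  have e4 : a4 = β₄ := sub_eq_zero.mp z4
  subst e1; subst e2; subst e3; subst e4
  rfl
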